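/- Assume (A2) M_{ij} ≤ 0 for all i ≠ j, where M = XᵀX and r = Xᵀy. Define Q = {θ ∈ ℝ^d : θ ≥ 0 and r_i − (Mθ)_i ≥ 0 for all i}. Then Q is positively invariant for the DLN ODE: if θ : [0,∞) → ℝ^d is differentiable, satisfies dθ_i/dt = θ_i (r_i − (Mθ)_i) for all t ≥ 0 and all i, and θ(0) ∈ Q, then θ(t) ∈ Q for all t ≥ 0. -/

import Mathlib

open Matrix Set Filter Topology

/-- First-touch lemma: if every coordinate starts positive and the vector field pushes
strictly inward on the boundary of the nonnegative orthant, all coordinates stay positive. -/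
lemma dln_first_touch {k : ℕ} (T : ℝ) (v v' : ℝ → Fin k → ℝ)
    (hderiv : ∀ t ∈ Set.Icc (0:ℝ) T, ∀ i, HasDerivAt (fun s => v s i) (v' t i) t)
    (h0 : ∀ i, 0 < v 0 i)
    (hbd : ∀ t ∈ Set.Icc (0:ℝ) T, ∀ i, (∀ j, 0 ≤ v t j) → v t i = 0 → 0 < v' t i) :
    ∀ t ∈ Set.Icc (0:ℝ) T, ∀ i, 0 < v t i := by
  by_contra hcon
  push_neg at hcon
  obtain ⟨t₁, ht₁, i₁, hi₁⟩ := hcon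
  set S : Set ℝ := {t | t ∈ Set.Icc (0:ℝ) T ∧ ∃ i, v t i ≤ 0} with hSdef
  have hSne : S.Nonempty := ⟨t₁, ht₁, i₁, hi₁⟩
  have hSbd : BddBelow S := ⟨0, fun s hs => hs.1.1⟩
  set τ := sInf S with hτdef
  have hτcl : τ ∈ closure S := csInf_mem_closure hSne hSbd
  have hτIcc : τ ∈ Set.Icc (0:ℝ) T :=
    isClosed_Icc.closure_subset ((closure_mono (fun s hs => hs.1)) hτcl)
  have hcontAt : ∀ i, ContinuousAt (fun s => v s i) τ :=
    fun i => (hderiv τ hτIcc i).continuousAt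
  have hτS : ∃ i, v τ i ≤ 0 := by
    by_contra hpos
    push_neg at hpos
    have hev : ∀ᶠ s in 𝓝 τ, ∀ i, 0 < v s i := by
      rw [eventually_all]
      intro i
      exact continuousAt_const.eventually_lt (hcontAt i) (hpos i)
    obtain ⟨s, hs1, hs2⟩ := (mem_closure_iff_nhds.mp hτcl) _ hev
    obtain ⟨i, hi⟩ := hs2.2
    exact absurd (hs1 i) (not_lt.mpr hi)
  have hτ0 : 0 < τ := by
    rcases lt_or_eq_of_le hτIcc.1 with h | h
    · exact h
    · exfalso
      obtain ⟨i, hi⟩ := hτS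
      rw [← h] at hi
      exact absurd (h0 i) (not_lt.mpr hi)
  have hbefore : ∀ s, 0 ≤ s → s < τ → ∀ j, 0 < v s j := by
    intro s hs0 hsτ j
    by_contra hle
    push_neg at hle
    have hsS : s ∈ S := ⟨⟨hs0, le_trans hsτ.le hτIcc.2⟩, j, hle⟩
    exact absurd (csInf_le hSbd hsS) (not_le.mpr hsτ)
  have hmem : Set.Ioo (0:ℝ) τ ∈ 𝓝[<] τ := Ioo_mem_nhdsLT_of_mem ⟨hτ0, le_refl τ⟩
  have hτnn : ∀ j, 0 ≤ v τ j := by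
    intro j
    have htend : Tendsto (fun s => v s j) (𝓝[<] τ) (𝓝 (v τ j)) :=
      (hcontAt j).tendsto.mono_left nhdsWithin_le_nhds
    refine ge_of_tendsto htend ?_
    filter_upwards [hmem] with s hs
    exact (hbefore s hs.1.le hs.2 j).le
  obtain ⟨i, hi⟩ := hτS
  have hvi : v τ i = 0 := le_antisymm hi (hτnn i)
  have hder : 0 < v' τ i := hbd τ hτIcc i hτnn hvi
  have hslope : Tendsto (slope (fun s => v s i) τ) (𝓝[<] τ) (𝓝 (v' τ i)) :=
    (hasDerivAt_iff_tendsto_slope.mp (hderiv τ hτIcc i)).mono_left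
      (nhdsWithin_mono τ (fun s hs => ne_of_lt hs))
  have hle0 : v' τ i ≤ 0 := by
    refine le_of_tendsto hslope ?_
    filter_upwards [hmem] with s hs
    have hpos := hbefore s hs.1.le hs.2 i
    rw [slope_def_field, hvi, sub_zero]
    apply div_nonpos_of_nonneg_of_nonpos hpos.le
    linarith [hs.2]
  exact absurd hder (not_lt.mpr hle0)

/-- Under (A2), the set `Q = {θ ≥ 0 : r − Mθ ≥ 0}` is positively invariant
for the DLN ODE `dθᵢ/dt = θᵢ (rᵢ − (Mθ)ᵢ)`. -/
theorem dln_positively_invariant (n d : ℕ) (hn : 0 < n) (hd : 0 < d)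
    (X : Matrix (Fin n) (Fin d) ℝ) (y : Fin n → ℝ)
    (M : Matrix (Fin d) (Fin d) ℝ) (r : Fin d → ℝ)
    (hM : M = Xᵀ * X) (hr : r = Xᵀ *ᵥ y)
    (hA2 : ∀ i j, i ≠ j → M i j ≤ 0)
    (θ : ℝ → Fin d → ℝ)
    (hode : ∀ t ≥ (0 : ℝ), ∀ i,
      HasDerivAt (fun τ => θ τ i) (θ t i * (r i - (M *ᵥ θ t) i)) t)
    (h0 : (∀ i, 0 ≤ θ 0 i) ∧ (∀ i, 0 ≤ r i - (M *ᵥ θ 0) i)) :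
    ∀ t ≥ (0 : ℝ), (∀ i, 0 ≤ θ t i) ∧ (∀ i, 0 ≤ r i - (M *ᵥ θ t) i) := by
  -- diagonal entries of M are nonnegative
  have hMdiag : ∀ i, 0 ≤ M i i := by
    intro i
    rw [hM, Matrix.mul_apply]
    refine Finset.sum_nonneg fun k _ => ?_
    rw [Matrix.transpose_apply]
    exact mul_self_nonneg _
  -- derivative of g i t := r i - (M *ᵥ θ t) i
  have hgder : ∀ t, 0 ≤ t → ∀ i,
      HasDerivAt (fun s => r i - (M *ᵥ θ s) i)
        (-(∑ j, M i j * (θ t j * (r j - (M *ᵥ θ t) j)))) t := by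
    intro t ht i
    have h1 : HasDerivAt (fun s => ∑ j, M i j * θ s j)
        (∑ j, M i j * (θ t j * (r j - (M *ᵥ θ t) j))) t :=
      HasDerivAt.fun_sum fun j _ => (hode t ht j).const_mul (M i j)
    simpa only [Matrix.mulVec, dotProduct] using h1.const_sub (r i)
  -- exponential helper
  have hexp : ∀ (L ε t : ℝ), HasDerivAt (fun s => ε * Real.exp (L * s))
      (ε * (Real.exp (L * t) * L)) t := by
    intro L ε t
    have h1 : HasDerivAt (fun s : ℝ => L * s) L t := by
      simpa using (hasDerivAt_id t).const_mul L
    exact h1.exp.const_mul ε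
  ------------------------------------------------------------------
  -- Part 1 : θ stays nonnegative
  ------------------------------------------------------------------
  have hθnn : ∀ t, 0 ≤ t → ∀ i, 0 ≤ θ t i := by
    intro T hT i₀
    -- bound on |g| over [0, T]
    have hcont : ContinuousOn (fun t => ∑ i, |r i - (M *ᵥ θ t) i|) (Set.Icc 0 T) := by
      intro t ht
      refine ContinuousAt.continuousWithinAt ?_
      exact tendsto_finset_sum _ fun i _ => (hgder t ht.1 i).continuousAt.abs
    obtain ⟨C, hC⟩ := isCompact_Icc.exists_bound_of_continuousOn hcont
    have hCb : ∀ t ∈ Set.Icc (0:ℝ) T, ∀ i, r i - (M *ᵥ θ t) i ≤ C := by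
      intro t ht i
      calc r i - (M *ᵥ θ t) i ≤ |r i - (M *ᵥ θ t) i| := le_abs_self _
        _ ≤ ∑ j, |r j - (M *ᵥ θ t) j| :=
            Finset.single_le_sum (f := fun j => |r j - (M *ᵥ θ t) j|)
              (fun j _ => abs_nonneg _) (Finset.mem_univ i)
        _ ≤ ‖∑ j, |r j - (M *ᵥ θ t) j|‖ := le_abs_self _
        _ ≤ C := hC t ht
    set L : ℝ := C + 1 with hLdef
    have key : ∀ ε : ℝ, 0 < ε → 0 < θ T i₀ + ε * Real.exp (L * T) := by
      intro ε hε
      refine dln_first_touch T (fun t i => θ t i + ε * Real.exp (L * t))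
        (fun t i => θ t i * (r i - (M *ᵥ θ t) i) + ε * (Real.exp (L * t) * L))
        ?_ ?_ ?_ T ⟨hT, le_refl T⟩ i₀
      · intro t ht i
        exact (hode t ht.1 i).add (hexp L ε t)
      · intro i
        show 0 < θ 0 i + ε * Real.exp (L * 0)
        have := h0.1 i
        have h1 : (0:ℝ) < ε * Real.exp (L * 0) := by positivity
        linarith
      · intro t ht i hnn hz
        have hz' : θ t i + ε * Real.exp (L * t) = 0 := hz
        show 0 < θ t i * (r i - (M *ᵥ θ t) i) + ε * (Real.exp (L * t) * L)
        have hE : (0:ℝ) < Real.exp (L * t) := Real.exp_pos _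
        have hgle : r i - (M *ᵥ θ t) i ≤ C := hCb t ht i
        have hθi : θ t i = -(ε * Real.exp (L * t)) := by linarith
        rw [hθi]
        have h1 : (1:ℝ) ≤ L - (r i - (M *ᵥ θ t) i) := by
          rw [hLdef]; linarith
        nlinarith [mul_pos hε hE]
    by_contra hneg
    push_neg at hneg
    set E := Real.exp (L * T) with hEdef
    have hE : (0:ℝ) < E := Real.exp_pos _
    have hεpos : (0:ℝ) < -θ T i₀ / (2 * E) := by
      apply div_pos (by linarith) (by linarith)
    have := key _ hεpos
    have heq : -θ T i₀ / (2 * E) * E = -θ T i₀ / 2 := by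
      field_simp
    rw [heq] at this
    linarith
  ------------------------------------------------------------------
  -- Part 2 : r - Mθ stays nonnegative
  ------------------------------------------------------------------
  have hgnn : ∀ t, 0 ≤ t → ∀ i, 0 ≤ r i - (M *ᵥ θ t) i := by
    intro T hT i₀
    -- bound on ∑ |M i j| * θ t j over [0, T]
    have hcont : ContinuousOn (fun t => ∑ p, ∑ q, |M p q| * θ t q) (Set.Icc 0 T) := by
      intro t ht
      refine ContinuousAt.continuousWithinAt ?_
      refine tendsto_finset_sum _ fun p _ => tendsto_finset_sum _ fun q _ => ?_
      exact (hode t ht.1 q).continuousAt.const_mul _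
    obtain ⟨C, hC⟩ := isCompact_Icc.exists_bound_of_continuousOn hcont
    have hCb : ∀ t ∈ Set.Icc (0:ℝ) T, ∀ i, ∑ j, |M i j| * θ t j ≤ C := by
      intro t ht i
      have hnni : ∀ p : Fin d, 0 ≤ ∑ q, |M p q| * θ t q := fun p =>
        Finset.sum_nonneg fun q _ => mul_nonneg (abs_nonneg _) (hθnn t ht.1 q)
      calc ∑ j, |M i j| * θ t j ≤ ∑ p, ∑ q, |M p q| * θ t q :=
            Finset.single_le_sum (f := fun p => ∑ q, |M p q| * θ t q)
              (fun p _ => hnni p) (Finset.mem_univ i)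
        _ ≤ ‖∑ p, ∑ q, |M p q| * θ t q‖ := le_abs_self _
        _ ≤ C := hC t ht
    set L : ℝ := C + 1 with hLdef
    have key : ∀ ε : ℝ, 0 < ε →
        0 < (r i₀ - (M *ᵥ θ T) i₀) + ε * Real.exp (L * T) := by
      intro ε hε
      refine dln_first_touch T (fun t i => (r i - (M *ᵥ θ t) i) + ε * Real.exp (L * t))
        (fun t i => -(∑ j, M i j * (θ t j * (r j - (M *ᵥ θ t) j)))
          + ε * (Real.exp (L * t) * L))
        ?_ ?_ ?_ T ⟨hT, le_refl T⟩ i₀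
      · intro t ht i
        exact (hgder t ht.1 i).add (hexp L ε t)
      · intro i
        show 0 < (r i - (M *ᵥ θ 0) i) + ε * Real.exp (L * 0)
        have := h0.2 i
        have h1 : (0:ℝ) < ε * Real.exp (L * 0) := by positivity
        linarith
      · intro t ht i hnn hz
        have hnn' : ∀ j, 0 ≤ (r j - (M *ᵥ θ t) j) + ε * Real.exp (L * t) := hnn
        have hz' : (r i - (M *ᵥ θ t) i) + ε * Real.exp (L * t) = 0 := hz
        show 0 < -(∑ j, M i j * (θ t j * (r j - (M *ᵥ θ t) j))) + ε * (Real.exp (L * t) * L)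
        have hE : (0:ℝ) < Real.exp (L * t) := Real.exp_pos _
        have he : (0:ℝ) < ε * Real.exp (L * t) := mul_pos hε hE
        set e := ε * Real.exp (L * t) with hedef
        -- each summand is bounded
        have hterm : ∀ j : Fin d,
            M i j * (θ t j * (r j - (M *ᵥ θ t) j)) ≤ (|M i j| * θ t j) * e := by
          intro j
          by_cases hij : j = i
          · subst hij
            have hgj : r j - (M *ᵥ θ t) j = -e := by linarith [hz']
            rw [hgj]
            have hθj := hθnn t ht.1 j
            have hMjj := hMdiag j
            have habs : |M j j| = M j j := abs_of_nonneg hMjj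
            rw [habs]
            nlinarith [mul_nonneg (mul_nonneg hMjj hθj) he.le]
          · have hMle : M i j ≤ 0 := hA2 i j (Ne.symm hij)
            have habs : |M i j| = -M i j := abs_of_nonpos hMle
            have hθj := hθnn t ht.1 j
            have hgj : -e ≤ r j - (M *ᵥ θ t) j := by linarith [hnn' j]
            have hkey : 0 ≤ (-M i j * θ t j) * ((r j - (M *ᵥ θ t) j) + e) :=
              mul_nonneg (mul_nonneg (by linarith) hθj) (by linarith)
            rw [habs]
            nlinarith
        have hsum : ∑ j, M i j * (θ t j * (r j - (M *ᵥ θ t) j))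
            ≤ (∑ j, |M i j| * θ t j) * e := by
          rw [Finset.sum_mul]
          exact Finset.sum_le_sum fun j _ => hterm j
        have hsum2 : (∑ j, |M i j| * θ t j) * e ≤ C * e :=
          mul_le_mul_of_nonneg_right (hCb t ht i) he.le
        have hLC : e * (L - C) = e := by rw [hLdef]; ring
        have : ε * (Real.exp (L * t) * L) = e * L := by rw [hedef]; ring
        rw [this]
        nlinarith
    by_contra hneg
    push_neg at hneg
    set E := Real.exp (L * T) with hEdef
    have hE : (0:ℝ) < E := Real.exp_pos _
    have hεpos : (0:ℝ) < -(r i₀ - (M *ᵥ θ T) i₀) / (2 * E) := by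
      apply div_pos (by linarith) (by linarith)
    have := key _ hεpos
    have heq : -(r i₀ - (M *ᵥ θ T) i₀) / (2 * E) * E = -(r i₀ - (M *ᵥ θ T) i₀) / 2 := by
      field_simp
    rw [heq] at this
    linarith
  intro t ht
  exact ⟨hθnn t ht, hgnn t ht⟩
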